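/- For all n ≥ 3, c(n) := a(n-1) satisfies c(n) = 3n/16 - 3/64 - (ψ(n-3) + 3ψ(n-2))/2^(n+3). -/
import Mathlib


theorem stmt_5
    (psi : ℕ → ℤ)
    (hpsi0 : psi 0 = 1) (hpsi1 : psi 1 = 0)
    (hpsi : ∀ n : ℕ, 2 ≤ n → psi n = -2 * psi (n - 2) - psi (n - 1))
    (i a : ℕ → ℚ)
    (ha0 : a 0 = 0) (hi1 : i 1 = 1) (ha1 : a 1 = 0)
    (ha : ∀ n : ℕ, 2 ≤ n → a n = (i (n - 1) + a (n - 1)) / 2)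
    (hi23 : ∀ n : ℕ, 2 ≤ n → n ≤ 3 → i n = i (n - 1))
    (hi4 : i 4 = (i 1 + a 1 + i 2 + a 2) / 2)
    (hi5 : ∀ n : ℕ, 5 ≤ n → i n = (i 2 + a 2 + i (n - 3) + a (n - 3)) / 2) :
    ∀ n : ℕ, 3 ≤ n →
      a (n - 1) = 3 * n / 16 - 3 / 64 - ((psi (n - 3) : ℚ) + 3 * psi (n - 2)) / 2 ^ (n + 3) := by
  have hi2 : i 2 = 1 := by simpa [hi1] using hi23 2 (by norm_num) (by norm_num)
  have ha2 : a 2 = 1/2 := by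
    have := ha 2 (by norm_num); simp [hi1, ha1] at this; linarith
  have hi3 : i 3 = 1 := by
    have := hi23 3 (by norm_num) (by norm_num); simpa [hi2] using this
  have ha3 : a 3 = 3/4 := by
    have := ha 3 (by norm_num); simp [hi2, ha2] at this; linarith
  have hi4' : i 4 = 5/4 := by rw [hi4, hi1, ha1, hi2, ha2]; norm_num
  have ha4 : a 4 = 7/8 := by
    have := ha 4 (by norm_num); simp [hi3, ha3] at this; linarith
  have hp2 : psi 2 = -2 := by
    have := hpsi 2 (by norm_num); simp [hpsi0, hpsi1] at this; omega
  have hp3 : psi 3 = 2 := by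
    have := hpsi 3 (by norm_num); simp [hpsi1, hp2] at this; omega
  have key : ∀ k : ℕ,
      a (k + 2) = 3 * (k + 3) / 16 - 3/64
        - ((psi k : ℚ) + 3 * psi (k+1)) / 2 ^ (k + 6)
      ∧ i (k + 2) = 3 * (k + 5) / 16 - 3/64
        + (7 * (psi k : ℚ) + 5 * psi (k+1)) / 2 ^ (k + 6) := by
    intro k
    induction k using Nat.strong_induction_on with
    | _ k ih =>
      match k, ih with
      | 0, _ => norm_num [ha2, hi2, hpsi0, hpsi1]
      | 1, _ => norm_num [ha3, hi3, hpsi1, hp2]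
      | 2, _ => norm_num [ha4, hi4', hp2, hp3]
      | (j+3), ih =>
        obtain ⟨hA2, hI2⟩ := ih (j+2) (by omega)
        obtain ⟨hA0, hI0⟩ := ih j (by omega)
        have e2 : (psi (j+2) : ℚ) = -2 * psi j - psi (j+1) := by
          have := hpsi (j+2) (by omega)
          push_cast [this]; ring
        have e3 : (psi (j+3) : ℚ) = -2 * psi (j+1) - psi (j+2) := by
          have := hpsi (j+3) (by omega)
          push_cast [this]; ring
        have e4 : (psi (j+4) : ℚ) = -2 * psi (j+2) - psi (j+3) := by
          have := hpsi (j+4) (by omega)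
          push_cast [this]; ring
        have hA5 : a (j+5) = (i (j+4) + a (j+4)) / 2 := by
          have := ha (j+5) (by omega); simpa using this
        have hI5 : i (j+5) = (i 2 + a 2 + i (j+2) + a (j+2)) / 2 := by
          have := hi5 (j+5) (by omega); simpa using this
        have hpow : ∀ m : ℕ, (2:ℚ) ^ (j + m) = 2 ^ j * 2 ^ m := fun m => pow_add 2 j m
        constructor
        · show a (j+5) = _
          rw [hA5]
          have h4 : j + 4 = (j + 2) + 2 := by ring
          rw [h4] at hA2 hI2 ⊢
          rw [hA2, hI2, e4, e3, e2]
          have h9 : j + 3 + 6 = j + 9 := by omega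
          have h8 : j + 2 + 6 = j + 8 := by omega
          rw [h9, h8, hpow 9, hpow 8]
          have : (2:ℚ) ^ j ≠ 0 := by positivity
          push_cast
          field_simp
          ring
        · show i (j+5) = _
          rw [hI5, hi2, ha2, hA0, hI0, e4, e3, e2]
          have h9 : j + 3 + 6 = j + 9 := by omega
          rw [h9, hpow 9, hpow 6]
          have : (2:ℚ) ^ j ≠ 0 := by positivity
          push_cast
          field_simp
          ring
  intro n hn
  obtain ⟨m, rfl⟩ : ∃ m, n = m + 3 := ⟨n - 3, by omega⟩
  have := (key m).1
  have h1 : m + 3 - 1 = m + 2 := by omega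
  have h2 : m + 3 - 3 = m := by omega
  have h3 : m + 3 - 2 = m + 1 := by omega
  have h4 : m + 3 + 3 = m + 6 := by omega
  rw [h1, h2, h3, h4, this]
  push_cast
  ring
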